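/- Suppose a mechanism P_{Y|Xⁿ} on finite alphabets satisfies ε-MI-DP, i.e. for every joint probability mass function P_{Xⁿ} and every index i, I(X_i; Y | X^{−i}) ≤ ε nats. Then the mechanism satisfies (0, √(2ε))-differential privacy: for all neighboring datasets x, x̃ and all S ⊆ 𝒴, P_{Y|Xⁿ}(S|x) ≤ P_{Y|Xⁿ}(S|x̃) + √(2ε). -/

import Mathlib

open Real
open scoped BigOperators

/-- Two datasets are neighbors if they differ in exactly one coordinate. -/
def Neighbor {n : ℕ} {𝒳 : Fin n → Type*} (x x' : ∀ i, 𝒳 i) : Prop :=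
  ∃ i, x i ≠ x' i ∧ ∀ j, j ≠ i → x j = x' j

/-- The conditional mutual information `I(X_i; Y | X^{−i})` (in nats) of the joint
distribution of `(Xⁿ, Y)` induced by a prior pmf `μ` on datasets and a mechanism
(channel) `Q = P_{Y|Xⁿ}`; here `X^{−i}` denotes all dataset coordinates except the
`i`-th.  The inner logarithm is `log (P(y|x) / P(y | x^{−i}))`. -/
noncomputable def condMI {n : ℕ} {𝒳 : Fin n → Type*} [∀ i, Fintype (𝒳 i)]
    {𝒴 : Type*} [Fintype 𝒴]
    (μ : (∀ i, 𝒳 i) → ℝ) (Q : (∀ i, 𝒳 i) → 𝒴 → ℝ) (i : Fin n) : ℝ :=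
  ∑ x, ∑ y, μ x * Q x y *
    log ((Q x y * ∑ a, μ (Function.update x i a)) /
      (∑ a, μ (Function.update x i a) * Q (Function.update x i a) y))

/-- If a mechanism on finite alphabets satisfies `ε`-MI-DP (for every joint pmf and
every index `i`, `I(X_i; Y | X^{−i}) ≤ ε` nats), then it satisfies
`(0, √(2ε))`-differential privacy: for all neighboring datasets `x, x̃` and all
`S ⊆ 𝒴`, `P_{Y|Xⁿ}(S|x) ≤ P_{Y|Xⁿ}(S|x̃) + √(2ε)`. -/

lemma aux1 {a c : ℝ} (ha : 0 ≤ a) (hc : 0 < c) : a - c ≤ a * log (a / c) := by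
  rcases eq_or_lt_of_le ha with h | h
  · simp [← h]; linarith
  · have h1 : log (c / a) ≤ c / a - 1 := Real.log_le_sub_one_of_pos (by positivity)
    have h2 : log (a / c) = - log (c / a) := by
      rw [← Real.log_inv]; congr 1; field_simp
    have h3 : a * log (c / a) ≤ a * (c / a - 1) :=
      mul_le_mul_of_nonneg_left h1 (le_of_lt h)
    have h4 : a * (c / a - 1) = c - a := by field_simp
    rw [h2]; nlinarith

lemma logsum {𝒴 : Type*} [Fintype 𝒴] (S : Finset 𝒴) (a b : 𝒴 → ℝ)
    (ha : ∀ y ∈ S, 0 ≤ a y) (hb : ∀ y ∈ S, 0 ≤ b y)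
    (hab : ∀ y ∈ S, b y = 0 → a y = 0) :
    (∑ y ∈ S, a y) * log ((∑ y ∈ S, a y) / (∑ y ∈ S, b y)) ≤
      ∑ y ∈ S, a y * log (a y / b y) := by
  set A := ∑ y ∈ S, a y with hA
  set B := ∑ y ∈ S, b y with hB
  have hA0 : 0 ≤ A := Finset.sum_nonneg ha
  have hB0 : 0 ≤ B := Finset.sum_nonneg hb
  rcases eq_or_lt_of_le hA0 with h0 | hApos
  · have hzero : ∀ y ∈ S, a y = 0 :=
      (Finset.sum_eq_zero_iff_of_nonneg ha).1 h0.symm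
    rw [← h0]
    simp only [zero_mul]
    apply Finset.sum_nonneg
    intro y hy; rw [hzero y hy]; simp
  · have hBpos : 0 < B := by
      rcases eq_or_lt_of_le hB0 with h0 | h
      · exfalso
        have hball : ∀ y ∈ S, b y = 0 := (Finset.sum_eq_zero_iff_of_nonneg hb).1 h0.symm
        have : A = 0 := Finset.sum_eq_zero (fun y hy => hab y hy (hball y hy))
        rw [this] at hApos; exact lt_irrefl _ hApos
      · exact h
    have key : ∀ y ∈ S, a y * log (A / B) + (a y - b y * (A / B)) ≤ a y * log (a y / b y) := by
      intro y hy
      rcases eq_or_lt_of_le (ha y hy) with h0 | hay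
      · rw [← h0]
        have : (0:ℝ) ≤ b y * (A / B) := by
          apply mul_nonneg (hb y hy); positivity
        simp; linarith
      · have hby : 0 < b y := by
          rcases eq_or_lt_of_le (hb y hy) with h0 | h
          · exfalso; have := hab y hy h0.symm; rw [this] at hay; exact lt_irrefl _ hay
          · exact h
        have hc : 0 < b y * (A / B) := by positivity
        have h5 := aux1 (le_of_lt hay) hc
        have hlog : log (a y / (b y * (A / B))) = log (a y / b y) - log (A / B) := by
          rw [show a y / (b y * (A / B)) = (a y / b y) / (A / B) by field_simp]
          rw [Real.log_div (by positivity) (by positivity)]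
        rw [hlog] at h5
        nlinarith
    have hsum := Finset.sum_le_sum key
    have heq : ∑ y ∈ S, (a y * log (A / B) + (a y - b y * (A / B))) =
        A * log (A / B) + (A - B * (A / B)) := by
      rw [Finset.sum_add_distrib, ← Finset.sum_mul, Finset.sum_sub_distrib, ← Finset.sum_mul]
    rw [heq] at hsum
    have heq2 : A - B * (A / B) = 0 := by field_simp; ring
    linarith

-- 2 q^2 ≤ -log (1-q)  for q ∈ [0,1)
lemma pinsker0 {q : ℝ} (h0 : 0 ≤ q) (h1 : q < 1) : 2 * q^2 ≤ -log (1 - q) := by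
  have hmono : MonotoneOn (fun t => -log (1 - t) - 2 * t^2) (Set.Icc 0 q) := by
    apply monotoneOn_of_deriv_nonneg (convex_Icc 0 q)
    · apply ContinuousOn.sub
      · apply ContinuousOn.neg
        apply ContinuousOn.log
        · fun_prop
        · intro t ht; rcases ht with ⟨_, htq⟩; nlinarith
      · fun_prop
    · rw [interior_Icc]
      intro t ht
      rcases ht with ⟨ht0, htq⟩
      have h1t : 1 - t ≠ 0 := by nlinarith
      apply DifferentiableAt.differentiableWithinAt
      apply DifferentiableAt.sub
      · apply DifferentiableAt.neg
        exact (Real.differentiableAt_log h1t).comp t (by fun_prop)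
      · fun_prop
    · rw [interior_Icc]
      intro t ht
      rcases ht with ⟨ht0, htq⟩
      have h1t : (0:ℝ) < 1 - t := by nlinarith
      have hd : HasDerivAt (fun t => -log (1 - t) - 2 * t^2) ((1-t)⁻¹ - 4*t) t := by
        have d1 : HasDerivAt (fun s : ℝ => 1 - s) (-1) t := by
          simpa using (hasDerivAt_id' t).const_sub (1:ℝ)
        have d2 : HasDerivAt (fun s : ℝ => log (1 - s)) ((1-t)⁻¹ * (-1)) t :=
          (Real.hasDerivAt_log (ne_of_gt h1t)).comp t d1
        have d3 : HasDerivAt (fun s : ℝ => 2 * s^2) (2 * (2 * t)) t := by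
          simpa using ((hasDerivAt_pow 2 t).const_mul (2:ℝ))
        exact (d2.neg.sub d3).congr_deriv (by ring)
      rw [hd.deriv]
      have : (1-t)⁻¹ - 4*t = (1 - 2*t)^2 / (1-t) := by field_simp; ring
      rw [this]
      positivity
  have := hmono (Set.left_mem_Icc.2 h0) (Set.right_mem_Icc.2 h0) h0
  simp at this
  linarith

lemma pinsker_mono {p q : ℝ} (hp0 : 0 < p) (hpq : p ≤ q) (hq1 : q < 1) :
    -(p * log p) - (1-p) * log (1-p) ≤
      -(p * log q) - (1-p) * log (1-q) - 2 * (p - q)^2 := by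
  have hmono : MonotoneOn (fun s => -(p * log s) - (1-p) * log (1-s) - 2 * (p-s)^2)
      (Set.Icc p q) := by
    apply monotoneOn_of_deriv_nonneg (convex_Icc p q)
    · apply ContinuousOn.sub
      apply ContinuousOn.sub
      · apply ContinuousOn.neg
        apply ContinuousOn.mul continuousOn_const
        apply ContinuousOn.log continuousOn_id
        intro t ht; exact ne_of_gt (lt_of_lt_of_le hp0 ht.1)
      · apply ContinuousOn.mul continuousOn_const
        apply ContinuousOn.log
        · fun_prop
        · intro t ht; have := lt_of_le_of_lt ht.2 hq1; intro h; nlinarith [h]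
      · fun_prop
    · rw [interior_Icc]
      intro t ht
      have ht0 : 0 < t := lt_of_lt_of_le hp0 (le_of_lt ht.1)
      have ht1 : t < 1 := lt_trans ht.2 hq1
      apply DifferentiableAt.differentiableWithinAt
      apply DifferentiableAt.sub
      apply DifferentiableAt.sub
      · exact ((Real.differentiableAt_log (ne_of_gt ht0)).const_mul p).neg
      · apply DifferentiableAt.const_mul
        exact (Real.differentiableAt_log (by intro h; nlinarith [h])).comp t (by fun_prop)
      · fun_prop
    · rw [interior_Icc]
      intro t ht
      have ht0 : 0 < t := lt_of_lt_of_le hp0 (le_of_lt ht.1)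
      have ht1 : (0:ℝ) < 1 - t := by have := lt_trans ht.2 hq1; linarith
      have hd : HasDerivAt (fun s => -(p * log s) - (1-p) * log (1-s) - 2 * (p-s)^2)
          (-(p * t⁻¹) - (1-p) * ((1-t)⁻¹ * (-1)) - 2 * (2 * (p - t) * (-1))) t := by
        have d1 : HasDerivAt (fun s : ℝ => -(p * log s)) (-(p * t⁻¹)) t :=
          ((Real.hasDerivAt_log (ne_of_gt ht0)).const_mul p).neg
        have d2 : HasDerivAt (fun s : ℝ => 1 - s) (-1) t := by
          simpa using (hasDerivAt_id' t).const_sub (1:ℝ)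
        have d3 : HasDerivAt (fun s : ℝ => (1-p) * log (1 - s)) ((1-p) * ((1-t)⁻¹ * (-1))) t :=
          ((Real.hasDerivAt_log (ne_of_gt ht1)).comp t d2).const_mul (1-p)
        have d4 : HasDerivAt (fun s : ℝ => 2 * (p - s)^2) (2 * (2 * (p - t) * (-1))) t := by
          have d5 : HasDerivAt (fun s : ℝ => p - s) (-1) t := by
            simpa using (hasDerivAt_id' t).const_sub p
          have := (d5.pow 2).const_mul (2:ℝ)
          simpa using this
        exact (d1.sub d3).sub d4
      rw [hd.deriv]
      have heq : -(p * t⁻¹) - (1-p) * ((1-t)⁻¹ * (-1)) - 2 * (2 * (p - t) * (-1))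
          = (t - p) * (1 - 2*t)^2 / (t * (1-t)) := by
        field_simp; ring
      rw [heq]
      have h1 : (0:ℝ) ≤ t - p := by linarith [ht.1]
      positivity
  have h := hmono (Set.left_mem_Icc.2 hpq) (Set.right_mem_Icc.2 hpq) hpq
  simpa using h

lemma pinsker_le {p q : ℝ} (hp0 : 0 ≤ p) (hpq : p ≤ q) (hq0 : 0 < q) (hq1 : q < 1) :
    2 * (p - q)^2 ≤ p * log (p/q) + (1-p) * log ((1-p)/(1-q)) := by
  rcases eq_or_lt_of_le hp0 with h | hp
  · rw [← h]
    have h0 := pinsker0 (le_of_lt hq0) hq1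
    simp only [zero_mul, sub_zero, one_mul, zero_sub, even_two, Even.neg_pow]
    rw [Real.log_div one_ne_zero (by linarith)]
    simpa using h0
  · have h := pinsker_mono hp hpq hq1
    have hp1 : p < 1 := lt_of_le_of_lt hpq hq1
    rw [Real.log_div (ne_of_gt hp) (ne_of_gt hq0),
        Real.log_div (by linarith : (1:ℝ)-p ≠ 0) (by linarith : (1:ℝ)-q ≠ 0)]
    nlinarith

lemma pinsker_bin {p q : ℝ} (hp0 : 0 ≤ p) (hp1 : p ≤ 1) (hq0 : 0 < q) (hq1 : q < 1) :
    2 * (p - q)^2 ≤ p * log (p/q) + (1-p) * log ((1-p)/(1-q)) := by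
  rcases le_or_gt p q with h | h
  · exact pinsker_le hp0 h hq0 hq1
  · have := pinsker_le (by linarith : (0:ℝ) ≤ 1 - p) (by linarith : 1 - p ≤ 1 - q)
      (by linarith) (by linarith)
    simp only [sub_sub_cancel] at this
    have heq : (1 - p - (1 - q))^2 = (p - q)^2 := by ring
    rw [heq] at this
    linarith
lemma kl_ge {𝒴 : Type*} [Fintype 𝒴] [DecidableEq 𝒴] (P M : 𝒴 → ℝ)
    (hP0 : ∀ y, 0 ≤ P y) (hM0 : ∀ y, 0 ≤ M y)
    (hP1 : ∑ y, P y = 1) (hM1 : ∑ y, M y = 1)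
    (hPM : ∀ y, M y = 0 → P y = 0) (S : Finset 𝒴)
    (hq0 : 0 < ∑ y ∈ S, M y) (hq1 : ∑ y ∈ S, M y < 1) :
    2 * ((∑ y ∈ S, P y) - (∑ y ∈ S, M y))^2 ≤ ∑ y, P y * log (P y / M y) := by
  set p := ∑ y ∈ S, P y with hp
  set q := ∑ y ∈ S, M y with hq
  have hsplit : ∑ y, P y * log (P y / M y) =
      (∑ y ∈ S, P y * log (P y / M y)) + (∑ y ∈ Sᶜ, P y * log (P y / M y)) :=
    (Finset.sum_add_sum_compl S _).symm
  have hPc : ∑ y ∈ Sᶜ, P y = 1 - p := by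
    have := Finset.sum_add_sum_compl S P
    rw [hP1] at this; linarith
  have hMc : ∑ y ∈ Sᶜ, M y = 1 - q := by
    have := Finset.sum_add_sum_compl S M
    rw [hM1] at this; linarith
  have h1 := logsum S P M (fun y _ => hP0 y) (fun y _ => hM0 y) (fun y _ h => hPM y h)
  have h2 := logsum Sᶜ P M (fun y _ => hP0 y) (fun y _ => hM0 y) (fun y _ h => hPM y h)
  rw [hPc, hMc] at h2
  have hp0 : 0 ≤ p := Finset.sum_nonneg (fun y _ => hP0 y)
  have hp1 : p ≤ 1 := by
    have : 0 ≤ ∑ y ∈ Sᶜ, P y := Finset.sum_nonneg (fun y _ => hP0 y)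
    rw [hPc] at this; linarith
  have h3 := pinsker_bin hp0 hp1 hq0 hq1
  rw [hsplit]
  calc 2 * (p - q)^2 ≤ p * log (p/q) + (1-p) * log ((1-p)/(1-q)) := h3
    _ ≤ _ := add_le_add h1 h2

theorem delta_dp_of_mi_dp {n : ℕ} {𝒳 : Fin n → Type*} [∀ i, Fintype (𝒳 i)]
    {𝒴 : Type*} [Fintype 𝒴]
    (Q : (∀ i, 𝒳 i) → 𝒴 → ℝ) (ε : ℝ) (hε : 0 ≤ ε)
    (hQ0 : ∀ x y, 0 ≤ Q x y) (hQ1 : ∀ x, ∑ y, Q x y = 1)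
    (hMIDP : ∀ (μ : (∀ i, 𝒳 i) → ℝ), (∀ x, 0 ≤ μ x) → (∑ x, μ x = 1) →
      ∀ i, condMI μ Q i ≤ ε) :
    ∀ x xt, Neighbor x xt → ∀ S : Finset 𝒴,
      ∑ y ∈ S, Q x y ≤ (∑ y ∈ S, Q xt y) + Real.sqrt (2 * ε) := by
  classical
  intro x xt hN S
  obtain ⟨i, hi, hoff⟩ := hN
  -- trivial case
  rcases le_or_gt (∑ y ∈ S, Q x y) (∑ y ∈ S, Q xt y) with htriv | hlt
  · have : 0 ≤ Real.sqrt (2 * ε) := Real.sqrt_nonneg _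
    linarith
  -- nontrivial: set up two-point prior
  have hxxt : x ≠ xt := fun h => hi (by rw [h])
  set μ : (∀ i, 𝒳 i) → ℝ :=
    fun z => (if z = x then (1:ℝ)/2 else 0) + (if z = xt then (1:ℝ)/2 else 0) with hμ
  have hμ0 : ∀ z, 0 ≤ μ z := by
    intro z; dsimp [μ]; split_ifs <;> norm_num
  have hμ1 : ∑ z, μ z = 1 := by
    rw [hμ, Finset.sum_add_distrib]
    rw [Finset.sum_ite_eq' Finset.univ x (fun _ => (1:ℝ)/2),
        Finset.sum_ite_eq' Finset.univ xt (fun _ => (1:ℝ)/2)]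
    norm_num
  -- update lemmas
  have hux : ∀ a, Function.update x i a = x ↔ a = x i := by
    intro a
    constructor
    · intro h; have := congrFun h i; simpa using this
    · intro h; rw [h]; exact Function.update_eq_self i x
  have huxt : ∀ a, Function.update x i a = xt ↔ a = xt i := by
    intro a
    constructor
    · intro h; have := congrFun h i; simpa using this
    · intro h; rw [h]; funext j
      by_cases hj : j = i
      · subst hj; simp
      · rw [Function.update_of_ne hj]; exact hoff j hj
  have hutx : ∀ a, Function.update xt i a = x ↔ a = x i := by
    intro a
    constructor
    · intro h; have := congrFun h i; simpa using this
    · intro h; rw [h]; funext j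
      by_cases hj : j = i
      · subst hj; simp
      · rw [Function.update_of_ne hj]; exact (hoff j hj).symm
  have hutt : ∀ a, Function.update xt i a = xt ↔ a = xt i := by
    intro a
    constructor
    · intro h; have := congrFun h i; simpa using this
    · intro h; rw [h]; exact Function.update_eq_self i xt
  -- the A-sums
  have hAx : ∑ a, μ (Function.update x i a) = 1 := by
    simp only [hμ, hux, huxt]
    rw [Finset.sum_add_distrib,
        Finset.sum_ite_eq' Finset.univ (x i) (fun _ => (1:ℝ)/2),
        Finset.sum_ite_eq' Finset.univ (xt i) (fun _ => (1:ℝ)/2)]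
    norm_num
  have hAxt : ∑ a, μ (Function.update xt i a) = 1 := by
    simp only [hμ, hutx, hutt]
    rw [Finset.sum_add_distrib,
        Finset.sum_ite_eq' Finset.univ (x i) (fun _ => (1:ℝ)/2),
        Finset.sum_ite_eq' Finset.univ (xt i) (fun _ => (1:ℝ)/2)]
    norm_num
  -- the B-sums
  set M : 𝒴 → ℝ := fun y => 1/2 * Q x y + 1/2 * Q xt y with hM
  have hBx : ∀ y, ∑ a, μ (Function.update x i a) * Q (Function.update x i a) y = M y := by
    intro y
    simp only [hμ, hux, huxt, add_mul, ite_mul, zero_mul]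
    rw [Finset.sum_add_distrib,
        Finset.sum_ite_eq' Finset.univ (x i) (fun a => 1/2 * Q (Function.update x i a) y),
        Finset.sum_ite_eq' Finset.univ (xt i) (fun a => 1/2 * Q (Function.update x i a) y)]
    simp only [Finset.mem_univ, if_true]
    rw [Function.update_eq_self i x, (huxt (xt i)).mpr rfl]
  have hBxt : ∀ y, ∑ a, μ (Function.update xt i a) * Q (Function.update xt i a) y = M y := by
    intro y
    simp only [hμ, hutx, hutt, add_mul, ite_mul, zero_mul]
    rw [Finset.sum_add_distrib,
        Finset.sum_ite_eq' Finset.univ (x i) (fun a => 1/2 * Q (Function.update xt i a) y),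
        Finset.sum_ite_eq' Finset.univ (xt i) (fun a => 1/2 * Q (Function.update xt i a) y)]
    simp only [Finset.mem_univ, if_true]
    rw [Function.update_eq_self i xt, (hutx (x i)).mpr rfl]
  -- evaluate condMI
  have hcond : condMI μ Q i =
      1/2 * (∑ y, Q x y * log (Q x y / M y)) + 1/2 * (∑ y, Q xt y * log (Q xt y / M y)) := by
    rw [condMI]
    rw [← Finset.sum_subset (Finset.subset_univ ({x, xt} : Finset (∀ j, 𝒳 j)))
        (by
          intro z _ hz
          simp only [Finset.mem_insert, Finset.mem_singleton, not_or] at hz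
          have : μ z = 0 := by simp [hμ, hz.1, hz.2]
          apply Finset.sum_eq_zero
          intro y _
          rw [this]; ring)]
    rw [Finset.sum_pair hxxt]
    have hμx : μ x = 1/2 := by simp [hμ, hxxt]
    have hμxt : μ xt = 1/2 := by simp [hμ, hxxt.symm]
    congr 1
    · rw [Finset.mul_sum]
      apply Finset.sum_congr rfl
      intro y _
      rw [hμx, hAx, hBx, mul_one]
      ring
    · rw [Finset.mul_sum]
      apply Finset.sum_congr rfl
      intro y _
      rw [hμxt, hAxt, hBxt, mul_one]
      ring
  -- apply MI-DP
  have hMI := hMIDP μ hμ0 hμ1 i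
  rw [hcond] at hMI
  -- set up sums
  set p := ∑ y ∈ S, Q x y with hp
  set p' := ∑ y ∈ S, Q xt y with hp'
  have hMS : ∑ y ∈ S, M y = 1/2 * p + 1/2 * p' := by
    rw [hM]; rw [Finset.sum_add_distrib, ← Finset.mul_sum, ← Finset.mul_sum]
  have hM0 : ∀ y, 0 ≤ M y := by
    intro y; dsimp [M]; have := hQ0 x y; have := hQ0 xt y; linarith
  have hM1 : ∑ y, M y = 1 := by
    rw [hM]; rw [Finset.sum_add_distrib, ← Finset.mul_sum, ← Finset.mul_sum, hQ1, hQ1]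
    norm_num
  have hp0 : 0 ≤ p' := Finset.sum_nonneg (fun y _ => hQ0 xt y)
  have hp1 : p ≤ 1 := by
    have h := Finset.sum_le_sum_of_subset_of_nonneg (Finset.subset_univ S)
      (fun y _ _ => hQ0 x y)
    rw [hQ1] at h; exact h
  have hq0 : 0 < ∑ y ∈ S, M y := by rw [hMS]; nlinarith
  have hq1 : ∑ y ∈ S, M y < 1 := by rw [hMS]; nlinarith
  have hPM1 : ∀ y, M y = 0 → Q x y = 0 := by
    intro y h; dsimp [M] at h; have := hQ0 x y; have := hQ0 xt y; linarith
  have hPM2 : ∀ y, M y = 0 → Q xt y = 0 := by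
    intro y h; dsimp [M] at h; have := hQ0 x y; have := hQ0 xt y; linarith
  have h1 := kl_ge (Q x) M (hQ0 x) hM0 (hQ1 x) hM1 hPM1 S hq0 hq1
  have h2 := kl_ge (Q xt) M (hQ0 xt) hM0 (hQ1 xt) hM1 hPM2 S hq0 hq1
  rw [hMS] at h1 h2
  rw [← hp] at h1
  rw [← hp'] at h2
  -- conclude
  have hkey : (p - p')^2 ≤ 2 * ε := by nlinarith
  calc p ≤ p' + (p - p') := by linarith
    _ ≤ p' + |p - p'| := by have := le_abs_self (p - p'); linarith
    _ = p' + Real.sqrt ((p - p')^2) := by rw [Real.sqrt_sq_eq_abs]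
    _ ≤ p' + Real.sqrt (2 * ε) := by
        have := Real.sqrt_le_sqrt hkey
        linarith
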